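/- Let P be a simple d-polytope and let F be a nonempty face of P with vertex set W. Then there exists an AOF-orientation O of G(P) such that W is initial with respect to O, i.e., no edge of G(P) with exactly one endpoint in W is directed from outside W into W. -/

import Mathlib

open Set

noncomputable section

/-- `P` is a polytope: the convex hull of a finite set of points. -/
def IsPolytope {d : ℕ} (P : Set (EuclideanSpace ℝ (Fin d))) : Prop :=
  ∃ s : Finset (EuclideanSpace ℝ (Fin d)),
    P = convexHull ℝ (s : Set (EuclideanSpace ℝ (Fin d)))

/-- The dimension of the affine span of a set. -/
def setDim {d : ℕ} (F : Set (EuclideanSpace ℝ (Fin d))) : ℕ :=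
  Module.finrank ℝ (vectorSpan ℝ F)

/-- A face of `P` is an exposed subset of `P` (this includes `∅` and `P` itself). -/
def IsFace {d : ℕ} (P F : Set (EuclideanSpace ℝ (Fin d))) : Prop :=
  IsExposed ℝ P F

/-- A `k`-face is a face whose affine span has dimension `k`. -/
def IsKFace {d : ℕ} (P : Set (EuclideanSpace ℝ (Fin d))) (k : ℕ)
    (F : Set (EuclideanSpace ℝ (Fin d))) : Prop :=
  IsFace P F ∧ setDim F = k

/-- The type of vertices of `P` (points whose singleton is a face, i.e. the `0`-faces). -/
abbrev Vtx {d : ℕ} (P : Set (EuclideanSpace ℝ (Fin d))) : Type :=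
  {v : EuclideanSpace ℝ (Fin d) // IsFace P {v}}

/-- The graph of the polytope `P`: two vertices are adjacent iff the segment
between them is an edge (`1`-face) of `P`. -/
def polyGraph {d : ℕ} (P : Set (EuclideanSpace ℝ (Fin d))) : SimpleGraph (Vtx P) where
  Adj u v := u ≠ v ∧
    IsFace P (segment ℝ (u : EuclideanSpace ℝ (Fin d)) (v : EuclideanSpace ℝ (Fin d)))
  symm := ⟨by
    rintro u v ⟨h1, h2⟩
    exact ⟨h1.symm, by rwa [segment_symm]⟩⟩
  loopless := ⟨by rintro v ⟨h1, _⟩; exact h1 rfl⟩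

/-- `P` is a simple `d`-polytope (in `ℝ^d`): a polytope whose affine span has
dimension `d` and each of whose vertices is incident to exactly `d` edges. -/
def IsSimplePolytope {d : ℕ} (P : Set (EuclideanSpace ℝ (Fin d))) : Prop :=
  IsPolytope P ∧ setDim P = d ∧ ∀ v : Vtx P, ((polyGraph P).neighborSet v).ncard = d

/-- `O` is an orientation of the simple graph `G`: each edge gets exactly one direction,
and only edges are directed. -/
def IsOrientation {V : Type*} (G : SimpleGraph V) (O : V → V → Prop) : Prop :=
  (∀ u v, O u v → G.Adj u v) ∧ (∀ u v, G.Adj u v → (O u v ↔ ¬ O v u))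

/-- `O` is acyclic: there is no directed cycle. -/
def AcyclicOrientation {V : Type*} (O : V → V → Prop) : Prop :=
  ∀ v, ¬ Relation.TransGen O v v

/-- `v` is a sink of the subgraph induced on `W`, under the orientation `O`. -/
def IsSinkOn {V : Type*} (O : V → V → Prop) (W : Set V) (v : V) : Prop :=
  v ∈ W ∧ ∀ u ∈ W, ¬ O v u

/-- The in-degree of `v` under `O`. -/
def inDeg {V : Type*} (O : V → V → Prop) (v : V) : ℕ := {u | O u v}.ncard

/-- `hNum O i` is the number of vertices of in-degree exactly `i` under `O`. -/
def hNum {V : Type*} (O : V → V → Prop) (i : ℕ) : ℕ := {v | inDeg O v = i}.ncard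

/-- `Hk O k = Σ_v C(indeg_O(v), k)`. -/
def Hk {V : Type*} [Fintype V] (O : V → V → Prop) (k : ℕ) : ℕ :=
  ∑ v : V, (inDeg O v).choose k

/-- The subgraph of `G` induced on `S` is `k`-regular. -/
def InducedKRegular {V : Type*} (G : SimpleGraph V) (k : ℕ) (S : Set V) : Prop :=
  ∀ v ∈ S, (S ∩ G.neighborSet v).ncard = k

/-- `𝒮` is a `k`-system of `G`: every member induces a `k`-regular subgraph, and the
node set of every `k`-frame (a root together with `k` of its neighbors) is contained
in a unique member of `𝒮`. -/
def IsKSystem {V : Type*} (G : SimpleGraph V) (k : ℕ) (𝒮 : Set (Set V)) : Prop :=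
  (∀ S ∈ 𝒮, InducedKRegular G k S) ∧
  (∀ (r : V) (N : Finset V), N.card = k → (∀ w ∈ N, G.Adj r w) →
    ∃! S, S ∈ 𝒮 ∧ insert r (N : Set V) ⊆ S)

/-- The set of vertices of `P` lying in `F`. -/
def faceVerts {d : ℕ} (P F : Set (EuclideanSpace ℝ (Fin d))) : Set (Vtx P) :=
  {v : Vtx P | (v : EuclideanSpace ℝ (Fin d)) ∈ F}

/-- The set of vertex sets of `k`-faces of `P`. -/
def kFaceSets {d : ℕ} (P : Set (EuclideanSpace ℝ (Fin d))) (k : ℕ) : Set (Set (Vtx P)) :=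
  {W | ∃ F, IsKFace P k F ∧ W = faceVerts P F}

/-- `f_k(P)`, the number of `k`-faces of `P`. -/
def numKFaces {d : ℕ} (P : Set (EuclideanSpace ℝ (Fin d))) (k : ℕ) : ℕ :=
  {F : Set (EuclideanSpace ℝ (Fin d)) | IsKFace P k F}.ncard

/-- `O` is an AOF-orientation of the graph of `P`: an acyclic orientation inducing a
unique sink on the subgraph induced by the vertex set of every nonempty face of `P`. -/
def IsAOF {d : ℕ} (P : Set (EuclideanSpace ℝ (Fin d))) (O : Vtx P → Vtx P → Prop) : Prop :=
  IsOrientation (polyGraph P) O ∧ AcyclicOrientation O ∧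
  ∀ F : Set (EuclideanSpace ℝ (Fin d)), IsFace P F → F.Nonempty →
    ∃! v : Vtx P, IsSinkOn O (faceVerts P F) v

section
variable {E : Type*} [NormedAddCommGroup E] [InnerProductSpace ℝ E]

open scoped Classical in
noncomputable def maxSet (s : Finset E) (f : E →L[ℝ] ℝ) : Finset E :=
  s.filter fun p => ∀ q ∈ s, f q ≤ f p

lemma mem_maxSet {s : Finset E} {f : E →L[ℝ] ℝ} {p : E} :
    p ∈ maxSet s f ↔ p ∈ s ∧ ∀ q ∈ s, f q ≤ f p := by
  classical
  simp [maxSet]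

lemma maxSet_subset {s : Finset E} {f : E →L[ℝ] ℝ} : maxSet s f ⊆ s :=
  fun p hp => (mem_maxSet.1 hp).1

lemma maxSet_nonempty {s : Finset E} (hs : s.Nonempty) (f : E →L[ℝ] ℝ) :
    (maxSet s f).Nonempty := by
  obtain ⟨m, hm, hmax⟩ := s.exists_max_image f hs
  exact ⟨m, mem_maxSet.2 ⟨hm, hmax⟩⟩

/-- max of a linear functional over a convex hull is attained on the generators -/
lemma hull_le_max {s : Finset E} {f : E →L[ℝ] ℝ} {M : ℝ} (h : ∀ p ∈ s, f p ≤ M) :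
    ∀ x ∈ convexHull ℝ (s : Set E), f x ≤ M := by
  intro x hx
  have : convexHull ℝ (s : Set E) ⊆ {y | f y ≤ M} := by
    apply convexHull_min _ (convex_halfSpace_le (f.toLinearMap.isLinear) M)
    intro p hp; exact h p hp
  exact this hx

/-- key: the exposed face determined by `f` is the hull of the argmax generators. -/
lemma hullMax {s : Finset E} (hs : s.Nonempty) (f : E →L[ℝ] ℝ) :
    {x ∈ convexHull ℝ (s : Set E) | ∀ y ∈ convexHull ℝ (s : Set E), f y ≤ f x}
      = convexHull ℝ (maxSet s f : Set E) := by
  classical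
  obtain ⟨m, hms⟩ := maxSet_nonempty hs f
  obtain ⟨hm, hmax⟩ := mem_maxSet.1 hms
  have hmhull : m ∈ convexHull ℝ (s : Set E) := subset_convexHull ℝ _ hm
  have hle : ∀ x ∈ convexHull ℝ (s : Set E), f x ≤ f m := hull_le_max hmax
  apply Set.Subset.antisymm
  · rintro x ⟨hxP, hxmax⟩
    have hfx : f x = f m := le_antisymm (hle x hxP) (hxmax m hmhull)
    rw [Finset.convexHull_eq] at hxP ⊢
    obtain ⟨w, hw0, hw1, hcm⟩ := hxP
    have hx_eq : x = ∑ y ∈ s, w y • y := by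
      rw [← hcm, Finset.centerMass_eq_of_sum_1 _ _ hw1]
      simp [id]
    have hfval : ∑ y ∈ s, w y * f y = f m := by
      have : f x = ∑ y ∈ s, w y * f y := by
        rw [hx_eq, map_sum]; simp [map_smul, smul_eq_mul]
      rw [← this, hfx]
    -- weights vanish off the argmax set
    have hvanish : ∀ y ∈ s, y ∉ maxSet s f → w y = 0 := by
      intro y hy hynot
      by_contra hwy
      have hwy' : 0 < w y := lt_of_le_of_ne (hw0 y hy) (Ne.symm hwy)
      have hfy : f y < f m := by
        have hne : ¬ ∀ q ∈ s, f q ≤ f y := fun hc => hynot (mem_maxSet.2 ⟨hy, hc⟩)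
        push_neg at hne
        obtain ⟨q, hq, hql⟩ := hne
        exact lt_of_lt_of_le hql (hmax q hq)
      have hlt : ∑ y ∈ s, w y * f y < ∑ y ∈ s, w y * f m := by
        apply Finset.sum_lt_sum
        · intro i hi
          exact mul_le_mul_of_nonneg_left (hle i (subset_convexHull ℝ _ hi)) (hw0 i hi)
        · exact ⟨y, hy, by nlinarith⟩
      rw [hfval, ← Finset.sum_mul, hw1, one_mul] at hlt
      exact lt_irrefl _ hlt
    refine ⟨w, fun y hy => hw0 y (maxSet_subset hy), ?_, ?_⟩
    · rw [← hw1]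
      exact Finset.sum_subset maxSet_subset (fun y hy hyn => hvanish y hy hyn)
    · rw [← hcm]
      exact Finset.centerMass_subset id maxSet_subset (fun i hi hin => hvanish i hi hin)
  · intro y hy
    have hyP : y ∈ convexHull ℝ (s : Set E) :=
      convexHull_mono (by exact_mod_cast maxSet_subset) hy
    have hge : f m ≤ f y := by
      have : convexHull ℝ (maxSet s f : Set E) ⊆ {z | f m ≤ f z} := by
        apply convexHull_min _ (convex_halfSpace_ge (f.toLinearMap.isLinear) (f m))
        intro p hp
        have hp' := mem_maxSet.1 hp
        exact hp'.2 m hm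
      exact this hy
    exact ⟨hyP, fun z hz => le_trans (hle z hz) hge⟩
end
section
variable {E : Type*} [NormedAddCommGroup E] [InnerProductSpace ℝ E]

/-- perturbation lemma: for small `ε`, the argmax of `f + ε g` is the argmax of `g`
over the argmax of `f`, and every non-maximizer of `f` has strictly smaller value than
every maximizer. -/
lemma perturb {s : Finset E} (hs : s.Nonempty) (f g : E →L[ℝ] ℝ) :
    ∃ ε₀ > 0, ∀ ε : ℝ, 0 < ε → ε < ε₀ →
      (∀ p ∈ s, ∀ q ∈ s, p ∉ maxSet s f → q ∈ maxSet s f →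
        (f + ε • g) p < (f + ε • g) q) ∧
      maxSet s (f + ε • g) = maxSet (maxSet s f) g := by
  classical
  set A := maxSet s f with hA
  -- ε₀
  set B : Finset ℝ := ((s \ A) ×ˢ A).image
      (fun pq => (f pq.2 - f pq.1) / max (g pq.1 - g pq.2) 1) with hB
  have hgap : ∀ p ∈ s, p ∉ A → ∀ q ∈ A, f p < f q := by
    intro p hp hpA q hq
    have hq' := mem_maxSet.1 hq
    have : ¬ ∀ r ∈ s, f r ≤ f p := fun hc => hpA (mem_maxSet.2 ⟨hp, hc⟩)
    push_neg at this
    obtain ⟨r, hr, hrl⟩ := this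
    exact lt_of_lt_of_le hrl (hq'.2 r hr)
  have hBpos : ∀ b ∈ B, 0 < b := by
    intro b hb
    rw [hB, Finset.mem_image] at hb
    obtain ⟨⟨p, q⟩, hpq, rfl⟩ := hb
    rw [Finset.mem_product, Finset.mem_sdiff] at hpq
    exact div_pos (by linarith [hgap p hpq.1.1 hpq.1.2 q hpq.2])
      (lt_of_lt_of_le one_pos (le_max_right _ _))
  set ε₀ : ℝ := if h : B.Nonempty then B.min' h else 1 with hε₀
  have hε₀pos : 0 < ε₀ := by
    rw [hε₀]; split
    · next h => exact hBpos _ (B.min'_mem h)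
    · exact one_pos
  refine ⟨ε₀, hε₀pos, ?_⟩
  intro ε hε hεlt
  have hkey : ∀ p ∈ s, p ∉ A → ∀ q ∈ A, (f + ε • g) p < (f + ε • g) q := by
    intro p hp hpA q hq
    have hmem : ((p, q) : E × E) ∈ (s \ A) ×ˢ A := by
      rw [Finset.mem_product, Finset.mem_sdiff]; exact ⟨⟨hp, hpA⟩, hq⟩
    have hval : (f q - f p) / max (g p - g q) 1 ∈ B := by
      rw [hB, Finset.mem_image]; exact ⟨(p, q), hmem, rfl⟩
    have hεle : ε < (f q - f p) / max (g p - g q) 1 := by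
      calc ε < ε₀ := hεlt
        _ ≤ _ := by
          rw [hε₀]
          have : B.Nonempty := ⟨_, hval⟩
          rw [dif_pos this]
          exact B.min'_le _ hval
    have hmaxpos : (0 : ℝ) < max (g p - g q) 1 := lt_of_lt_of_le one_pos (le_max_right _ _)
    have h1 : ε * (g p - g q) ≤ ε * max (g p - g q) 1 :=
      mul_le_mul_of_nonneg_left (le_max_left _ _) (le_of_lt hε)
    have h2 : ε * max (g p - g q) 1 < f q - f p := by
      calc ε * max (g p - g q) 1 < ((f q - f p) / max (g p - g q) 1) * max (g p - g q) 1 := by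
            apply mul_lt_mul_of_pos_right hεle hmaxpos
        _ = f q - f p := div_mul_cancel₀ _ (ne_of_gt hmaxpos)
    simp only [ContinuousLinearMap.add_apply, ContinuousLinearMap.coe_smul',
      Pi.smul_apply, smul_eq_mul]
    nlinarith
  refine ⟨fun p hp q _ hpA hqA => hkey p hp hpA q hqA, ?_⟩
  have hAcon : ∀ p ∈ A, ∀ q ∈ A, f p = f q := by
    intro p hp q hq
    exact le_antisymm ((mem_maxSet.1 hq).2 p (maxSet_subset hp))
      ((mem_maxSet.1 hp).2 q (maxSet_subset hq))
  have hAne : A.Nonempty := maxSet_nonempty hs f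
  obtain ⟨a, ha⟩ := maxSet_nonempty hAne g
  have haA : a ∈ A := maxSet_subset ha
  ext p
  constructor
  · intro hp
    obtain ⟨hps, hpmax⟩ := mem_maxSet.1 hp
    have hpA : p ∈ A := by
      by_contra hpA
      exact absurd (hpmax a (maxSet_subset haA)) (not_le.2 (hkey p hps hpA a haA))
    refine mem_maxSet.2 ⟨hpA, ?_⟩
    intro q hq
    have h1 := hpmax q (maxSet_subset hq)
    have hfq : f q = f p := hAcon q hq p hpA
    simp only [ContinuousLinearMap.add_apply, ContinuousLinearMap.coe_smul',
      Pi.smul_apply, smul_eq_mul] at h1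
    exact le_of_mul_le_mul_left (by linarith) hε
  · intro hp
    obtain ⟨hpA, hpmax⟩ := mem_maxSet.1 hp
    refine mem_maxSet.2 ⟨maxSet_subset hpA, ?_⟩
    intro q hq
    by_cases hqA : q ∈ A
    · have hfq : f q = f p := hAcon q hqA p hpA
      have hgq : g q ≤ g p := hpmax q hqA
      simp only [ContinuousLinearMap.add_apply, ContinuousLinearMap.coe_smul',
        Pi.smul_apply, smul_eq_mul]
      nlinarith
    · exact le_of_lt (hkey q hq hqA p hpA)
end
section
variable {E : Type*} [NormedAddCommGroup E] [InnerProductSpace ℝ E]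

lemma avoid_hyperplanes (D : Finset E) (hD : (0 : E) ∉ D) :
    ∃ x : E, ∀ d ∈ D, inner (𝕜 := ℝ) x d ≠ 0 := by
  classical
  induction D using Finset.induction_on with
  | empty => exact ⟨0, by simp⟩
  | @insert d D hdD ih =>
    have hd0 : d ≠ 0 := fun h => hD (by simp [h])
    obtain ⟨x, hx⟩ := ih (fun h => hD (Finset.mem_insert_of_mem h))
    -- bad values of c
    set bad : Finset ℝ := (insert d D).image
        (fun d' => if (inner (𝕜 := ℝ) d d' : ℝ) = 0 then 0
          else -(inner (𝕜 := ℝ) x d') / (inner (𝕜 := ℝ) d d')) ∪ {0} with hbad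
    obtain ⟨c, hc⟩ := Infinite.exists_notMem_finset bad
    refine ⟨x + c • d, ?_⟩
    intro d' hd'
    have hexp : (inner (𝕜 := ℝ) (x + c • d) d' : ℝ)
        = inner (𝕜 := ℝ) x d' + c * inner (𝕜 := ℝ) d d' := by
      rw [inner_add_left, real_inner_smul_left]
    rw [hexp]
    by_cases hB : (inner (𝕜 := ℝ) d d' : ℝ) = 0
    · rcases Finset.mem_insert.1 hd' with rfl | hd'D
      · exact absurd (inner_self_eq_zero.1 hB) hd0
      · rw [hB, mul_zero, add_zero]; exact hx d' hd'D
    · intro hcontra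
      apply hc
      rw [hbad, Finset.mem_union, Finset.mem_image]
      left
      refine ⟨d', hd', ?_⟩
      rw [if_neg hB]
      field_simp
      linarith
end
section
variable {E : Type*} [NormedAddCommGroup E] [InnerProductSpace ℝ E]

lemma inj_functional (s : Finset E) : ∃ g : E →L[ℝ] ℝ, Set.InjOn g (s : Set E) := by
  classical
  set D : Finset E := ((s ×ˢ s).filter (fun pq => pq.1 ≠ pq.2)).image
      (fun pq => pq.1 - pq.2) with hD
  have hD0 : (0 : E) ∉ D := by
    rw [hD, Finset.mem_image]
    rintro ⟨⟨p, q⟩, hpq, hzero⟩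
    rw [Finset.mem_filter] at hpq
    exact hpq.2 (sub_eq_zero.1 hzero)
  obtain ⟨x, hx⟩ := avoid_hyperplanes D hD0
  refine ⟨innerSL ℝ x, ?_⟩
  intro p hp q hq hpq
  by_contra hne
  have hmem : p - q ∈ D := by
    rw [hD, Finset.mem_image]
    exact ⟨(p, q), Finset.mem_filter.2 ⟨Finset.mem_product.2 ⟨hp, hq⟩, hne⟩, rfl⟩
  apply hx _ hmem
  have : (inner (𝕜 := ℝ) x p : ℝ) = inner (𝕜 := ℝ) x q := hpq
  rw [inner_sub_right, this, sub_self]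
end

section
variable {E : Type*} [NormedAddCommGroup E] [InnerProductSpace ℝ E]

lemma inner_segment_le {a b y : E} (hy : y ∈ segment ℝ a b) :
    (inner (𝕜 := ℝ) (b - a) y : ℝ) ≤ inner (𝕜 := ℝ) (b - a) b := by
  rw [segment_eq_image'] at hy
  obtain ⟨θ, hθ, rfl⟩ := hy
  have h1 : (inner (𝕜 := ℝ) (b - a) (a + θ • (b - a)) : ℝ)
      = inner (𝕜 := ℝ) (b - a) a + θ * ‖b - a‖ ^ 2 := by
    rw [inner_add_right, real_inner_smul_right, real_inner_self_eq_norm_sq]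
  have h2 : (inner (𝕜 := ℝ) (b - a) b : ℝ) = inner (𝕜 := ℝ) (b - a) a + ‖b - a‖ ^ 2 := by
    have h3 : (inner (𝕜 := ℝ) (b - a) (b - a) : ℝ) = ‖b - a‖ ^ 2 :=
      real_inner_self_eq_norm_sq _
    rw [inner_sub_right] at h3
    linarith
  rw [h1, h2]
  nlinarith [sq_nonneg ‖b - a‖, hθ.2, hθ.1]

lemma inner_segment_lt {a b y : E} (hy : y ∈ segment ℝ a b) (hyb : y ≠ b) (hab : a ≠ b) :
    (inner (𝕜 := ℝ) (b - a) y : ℝ) < inner (𝕜 := ℝ) (b - a) b := by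
  rw [segment_eq_image'] at hy
  obtain ⟨θ, hθ, rfl⟩ := hy
  have h1 : (inner (𝕜 := ℝ) (b - a) (a + θ • (b - a)) : ℝ)
      = inner (𝕜 := ℝ) (b - a) a + θ * ‖b - a‖ ^ 2 := by
    rw [inner_add_right, real_inner_smul_right, real_inner_self_eq_norm_sq]
  have h2 : (inner (𝕜 := ℝ) (b - a) b : ℝ) = inner (𝕜 := ℝ) (b - a) a + ‖b - a‖ ^ 2 := by
    have h3 : (inner (𝕜 := ℝ) (b - a) (b - a) : ℝ) = ‖b - a‖ ^ 2 :=
      real_inner_self_eq_norm_sq _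
    rw [inner_sub_right] at h3
    linarith
  have hne : b - a ≠ 0 := sub_ne_zero.2 (Ne.symm hab)
  have hnpos : (0 : ℝ) < ‖b - a‖ ^ 2 := by
    have := norm_pos_iff.mpr hne
    positivity
  have hθ1 : θ ≠ 1 := by
    intro hc
    apply hyb
    rw [hc]
    simp
  have hθlt : θ < 1 := lt_of_le_of_ne hθ.2 hθ1
  rw [h1, h2]
  nlinarith
end

section
variable {E : Type*} [NormedAddCommGroup E] [InnerProductSpace ℝ E]

lemma improving_edge (s : Finset E) (v : E) (hv : v ∈ s) (ℓ φ : E →L[ℝ] ℝ)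
    (hℓ : ∀ p ∈ s, p ≠ v → ℓ p < ℓ v)
    (w : E) (hw : w ∈ s) (hφw : φ w < φ v) :
    ∃ u ∈ s, φ u < φ v ∧ u ≠ v ∧ ∃ g : E →L[ℝ] ℝ,
      (maxSet s g : Set E) ⊆ segment ℝ v u ∧ v ∈ maxSet s g ∧ u ∈ maxSet s g := by
  classical
  have hwv : w ≠ v := fun h => absurd hφw (by rw [h]; exact lt_irrefl _)
  set s' := s.erase v with hs'
  have hws' : w ∈ s' := Finset.mem_erase.2 ⟨hwv, hw⟩
  have hs'ne : s'.Nonempty := ⟨w, hws'⟩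
  obtain ⟨m₀, hm₀, hm₀max⟩ := s'.exists_max_image ℓ hs'ne
  have hm₀v : ℓ m₀ < ℓ v := hℓ m₀ (Finset.mem_of_mem_erase hm₀) (Finset.ne_of_mem_erase hm₀)
  set t : ℝ := (ℓ v + ℓ m₀) / 2 with ht
  have htlt : t < ℓ v := by rw [ht]; linarith
  have hlt' : ∀ p ∈ s', ℓ p < t := fun p hp =>
    lt_of_le_of_lt (hm₀max p hp) (by rw [ht]; linarith)
  set τ : E → ℝ := fun p => (ℓ v - t) / (ℓ v - ℓ p) with hτ
  have hτpos : ∀ p ∈ s', 0 < τ p := fun p hp =>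
    div_pos (by linarith) (by linarith [hlt' p hp])
  set ρ : E → E := fun p => v + τ p • (p - v) with hρ
  have hℓρ : ∀ p ∈ s', ℓ (ρ p) = t := by
    intro p hp
    have hne : ℓ v - ℓ p ≠ 0 := by have := hlt' p hp; intro h; linarith
    simp only [hρ, hτ, map_add, map_smul, map_sub, smul_eq_mul]
    field_simp
    ring
  set Q := s'.image ρ with hQ
  have hQne : Q.Nonempty := ⟨ρ w, Finset.mem_image_of_mem ρ hws'⟩
  obtain ⟨g₃, hg₃⟩ := inj_functional Q
  obtain ⟨ε₀, hε₀, hper⟩ := perturb hQne (-φ) g₃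
  set h : E →L[ℝ] ℝ := -φ + (ε₀/2) • g₃ with hh
  have hper2 := (hper (ε₀/2) (by linarith) (by linarith)).2
  obtain ⟨e, he⟩ := maxSet_nonempty hQne h
  have heQ : e ∈ Q := maxSet_subset he
  have hemax : ∀ q ∈ Q, h q ≤ h e := (mem_maxSet.1 he).2
  have hstrict : ∀ q ∈ Q, q ≠ e → h q < h e := by
    intro q hq hqe
    rcases lt_or_eq_of_le (hemax q hq) with hlt | heq
    · exact hlt
    · exfalso; apply hqe
      have hqmax : q ∈ maxSet Q h :=
        mem_maxSet.2 ⟨hq, fun r hr => heq ▸ hemax r hr⟩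
      have he' := he; rw [hper2] at hqmax he'
      have h1 := (mem_maxSet.1 hqmax).2 e (mem_maxSet.1 he').1
      have h2 := (mem_maxSet.1 he').2 q (mem_maxSet.1 hqmax).1
      exact hg₃ hq heQ (le_antisymm h2 h1)
  have heφ : ∀ q ∈ Q, φ e ≤ φ q := by
    intro q hq
    have he' : e ∈ maxSet Q (-φ) := maxSet_subset (hper2 ▸ he)
    have := (mem_maxSet.1 he').2 q hq
    simpa using this
  have hφρ : ∀ p ∈ s', φ (ρ p) = φ v + τ p * (φ p - φ v) := by
    intro p hp
    simp only [hρ, map_add, map_smul, map_sub, smul_eq_mul]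
    try ring
  have hφe : φ e < φ v := by
    have h1 := heφ (ρ w) (Finset.mem_image_of_mem ρ hws')
    have h2 := hφρ w hws'
    nlinarith [hτpos w hws']
  set α : ℝ := (h e - h v) / (ℓ v - t) with hα
  have hts : ℓ v - t ≠ 0 := by intro hc; linarith
  have hαeq : α * (ℓ v - t) = h e - h v := div_mul_cancel₀ _ hts
  set g : E →L[ℝ] ℝ := h + α • ℓ with hg
  have hgapp : ∀ x : E, g x = h x + α * ℓ x := by
    intro x
    simp [hg, ContinuousLinearMap.add_apply, smul_eq_mul]
  have hkey : ∀ p ∈ s', τ p * (g p - g v) = h (ρ p) - h e := by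
    intro p hp
    have hhρ : h (ρ p) = h v + τ p * (h p - h v) := by
      simp only [hρ, map_add, map_smul, map_sub, smul_eq_mul]
      try ring
    have hτℓ : τ p * (ℓ p - ℓ v) = t - ℓ v := by
      have hne : ℓ v - ℓ p ≠ 0 := by have := hlt' p hp; intro hc; linarith
      rw [hτ]
      field_simp
      try ring
    rw [hgapp p, hgapp v, hhρ]
    linear_combination α * hτℓ - hαeq
  have hgle : ∀ p ∈ s, g p ≤ g v := by
    intro p hp
    by_cases hpv : p = v
    · rw [hpv]
    · have hp' : p ∈ s' := Finset.mem_erase.2 ⟨hpv, hp⟩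
      have h1 := hkey p hp'
      have h2 : h (ρ p) ≤ h e := hemax (ρ p) (Finset.mem_image_of_mem ρ hp')
      have h3 : τ p * (g p - g v) ≤ 0 := by rw [h1]; linarith
      by_contra hgt
      push_neg at hgt
      have := mul_pos (hτpos p hp') (by linarith : (0:ℝ) < g p - g v)
      linarith
  have hgv : v ∈ maxSet s g := mem_maxSet.2 ⟨hv, hgle⟩
  have hgchar : ∀ p ∈ s', (p ∈ maxSet s g ↔ ρ p = e) := by
    intro p hp'
    have hps : p ∈ s := Finset.mem_of_mem_erase hp'
    constructor
    · intro hpm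
      have hgeq : g v ≤ g p := (mem_maxSet.1 hpm).2 v hv
      have h1 := hkey p hp'
      by_contra hne
      have h2 := hstrict (ρ p) (Finset.mem_image_of_mem ρ hp') hne
      have h3 : g p = g v := le_antisymm (hgle p hps) hgeq
      rw [h3, sub_self, mul_zero] at h1
      linarith
    · intro hpe
      refine mem_maxSet.2 ⟨hps, ?_⟩
      intro q hq
      have h1 := hkey p hp'
      rw [hpe, sub_self] at h1
      have hτp := hτpos p hp'
      have hgpv : g p = g v := by
        rcases mul_eq_zero.1 h1 with h2 | h2
        · exact absurd h2 (ne_of_gt hτp)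
        · exact sub_eq_zero.1 h2
      rw [hgpv]
      exact hgle q hq
  set T := s'.filter (fun p => ρ p = e) with hT
  have hTne : T.Nonempty := by
    obtain ⟨p₀, hp₀, hp₀e⟩ := Finset.mem_image.1 heQ
    exact ⟨p₀, Finset.mem_filter.2 ⟨hp₀, hp₀e⟩⟩
  obtain ⟨u, huT, humin⟩ := T.exists_min_image ℓ hTne
  have huf := Finset.mem_filter.1 huT
  have hus' : u ∈ s' := huf.1
  have hus : u ∈ s := Finset.mem_of_mem_erase hus'
  have huτ : 0 < τ u := hτpos u hus'
  have hne_ev : e ≠ v := by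
    intro hev
    obtain ⟨p₀, hp₀, hp₀e⟩ := Finset.mem_image.1 heQ
    have : ℓ e = t := by rw [← hp₀e]; exact hℓρ p₀ hp₀
    rw [hev] at this
    linarith
  have hue : τ u • (u - v) = e - v := by
    have h1 : v + τ u • (u - v) = e := huf.2
    rw [← h1]; abel
  have huv : u ≠ v := by
    intro hc
    rw [hc, sub_self, smul_zero] at hue
    exact hne_ev (sub_eq_zero.1 hue.symm)
  have hφu : φ u < φ v := by
    have h1 : τ u * (φ u - φ v) = φ e - φ v := by
      have := congrArg φ hue
      simpa [map_smul, map_sub, smul_eq_mul] using this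
    by_contra hge
    push_neg at hge
    have h2 : 0 ≤ τ u * (φ u - φ v) := mul_nonneg (le_of_lt huτ) (by linarith)
    linarith
  have hpre : ∀ p ∈ T, p ∈ segment ℝ v u := by
    intro p hpT
    have hpf := Finset.mem_filter.1 hpT
    have hps' := hpf.1
    have hτp := hτpos p hps'
    have hpe : τ p • (p - v) = e - v := by
      have h1 : v + τ p • (p - v) = e := hpf.2
      rw [← h1]; abel
    have hβ : p - v = (τ u / τ p) • (u - v) := by
      have hp1 : p - v = (τ p)⁻¹ • (e - v) := by
        rw [← hpe, smul_smul, inv_mul_cancel₀ (ne_of_gt hτp), one_smul]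
      rw [hp1, ← hue, smul_smul, div_eq_inv_mul]
    have hβ1 : τ u / τ p ≤ 1 := by
      rw [div_le_one hτp, hτ]
      have h1 : 0 < ℓ v - ℓ u := by linarith [hlt' u hus']
      have h2 : 0 < ℓ v - ℓ p := by linarith [hlt' p hps']
      have h3 : ℓ u ≤ ℓ p := humin p hpT
      apply div_le_div_of_nonneg_left (by linarith) h2 (by linarith)
    rw [segment_eq_image']
    refine ⟨τ u / τ p, ⟨by positivity, hβ1⟩, ?_⟩
    show v + (τ u / τ p) • (u - v) = p
    rw [← hβ]
    abel
  refine ⟨u, hus, hφu, huv, g, ?_, hgv, (hgchar u hus').2 huf.2⟩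
  intro p hpm
  rw [Finset.mem_coe] at hpm
  by_cases hpv : p = v
  · rw [hpv]; exact left_mem_segment ℝ v u
  · have hps : p ∈ s := maxSet_subset hpm
    have hp' : p ∈ s' := Finset.mem_erase.2 ⟨hpv, hps⟩
    exact hpre p (Finset.mem_filter.2 ⟨hp', (hgchar p hp').1 hpm⟩)
end

/-- For every nonempty face `F` of a simple `d`-polytope there is an
AOF-orientation for which the vertex set of `F` is initial (no edge is directed from
outside `F` into `F`). -/
theorem stmt_15 {d : ℕ} (P : Set (EuclideanSpace ℝ (Fin d))) (hP : IsSimplePolytope P)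
    (F : Set (EuclideanSpace ℝ (Fin d))) (hF : IsFace P F) (hne : F.Nonempty) :
    ∃ O : Vtx P → Vtx P → Prop, IsAOF P O ∧
      ∀ u v : Vtx P, O u v → (v : EuclideanSpace ℝ (Fin d)) ∈ F →
        (u : EuclideanSpace ℝ (Fin d)) ∈ F := by
  classical
  obtain ⟨s₀, hPs⟩ := hP.1
  have hFP : F ⊆ P := hF.subset
  have hPne : P.Nonempty := hne.mono hFP
  have hs₀ : s₀.Nonempty := by
    by_contra hc
    rw [Finset.not_nonempty_iff_eq_empty] at hc
    rw [hc] at hPs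
    simp only [Finset.coe_empty, convexHull_empty] at hPs
    exact Set.not_nonempty_empty (hPs ▸ hPne)
  have hmemP : ∀ q ∈ s₀, q ∈ P := fun q hq => by
    rw [hPs]; exact subset_convexHull ℝ _ hq
  have hmemA : ∀ (l : EuclideanSpace ℝ (Fin d) →L[ℝ] ℝ) (G : Set (EuclideanSpace ℝ (Fin d))),
      G = {x ∈ P | ∀ y ∈ P, l y ≤ l x} → ∀ x ∈ G, x ∈ s₀ → x ∈ maxSet s₀ l := by
    intro l G hGeq x hxG hxs
    rw [hGeq] at hxG
    exact mem_maxSet.2 ⟨hxs, fun q hq => hxG.2 q (hmemP q hq)⟩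
  have hvtx : ∀ v : Vtx P, ∃ l : EuclideanSpace ℝ (Fin d) →L[ℝ] ℝ,
      maxSet s₀ l = {(v : EuclideanSpace ℝ (Fin d))} := by
    intro v
    obtain ⟨l, hl⟩ := v.2 ⟨v.1, rfl⟩
    refine ⟨l, ?_⟩
    have h1 : ({(v : EuclideanSpace ℝ (Fin d))} : Set _) = convexHull ℝ ↑(maxSet s₀ l) := by
      rw [hl, hPs, hullMax hs₀]
    have hsub : (maxSet s₀ l : Set _) ⊆ {(v : EuclideanSpace ℝ (Fin d))} :=
      h1 ▸ subset_convexHull ℝ _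
    obtain ⟨x, hx⟩ := maxSet_nonempty hs₀ l
    have hxv : x = v.1 := hsub (Finset.mem_coe.2 hx)
    exact Finset.eq_singleton_iff_unique_mem.2
      ⟨hxv ▸ hx, fun y hy => hsub (Finset.mem_coe.2 hy)⟩
  have hvs₀ : ∀ v : Vtx P, (v : EuclideanSpace ℝ (Fin d)) ∈ s₀ := by
    intro v; obtain ⟨l, hl⟩ := hvtx v
    have : v.1 ∈ maxSet s₀ l := by rw [hl]; exact Finset.mem_singleton_self _
    exact maxSet_subset this
  have hvstrict : ∀ v : Vtx P, ∃ l : EuclideanSpace ℝ (Fin d) →L[ℝ] ℝ,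
      ∀ p ∈ s₀, p ≠ v.1 → l p < l v.1 := by
    intro v; obtain ⟨l, hl⟩ := hvtx v
    refine ⟨l, fun p hp hpv => ?_⟩
    have hvm : v.1 ∈ maxSet s₀ l := by rw [hl]; exact Finset.mem_singleton_self _
    have hvmax := (mem_maxSet.1 hvm).2
    have hpno : p ∉ maxSet s₀ l := by rw [hl]; simp [hpv]
    have hnall : ¬ ∀ q ∈ s₀, l q ≤ l p := fun hc => hpno (mem_maxSet.2 ⟨hp, hc⟩)
    push_neg at hnall
    obtain ⟨q, hq, hlq⟩ := hnall
    exact lt_of_lt_of_le hlq (hvmax q hq)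
  obtain ⟨lF, hlF⟩ := hF hne
  have hFhull : F = convexHull ℝ ↑(maxSet s₀ lF) := by rw [hlF, hPs, hullMax hs₀]
  obtain ⟨g₀, hg₀⟩ := inj_functional s₀
  obtain ⟨ε₀, hε₀pos, hper0⟩ := perturb hs₀ lF g₀
  set bad : Finset ℝ := (s₀ ×ˢ s₀).image
      (fun pq => (lF pq.1 - lF pq.2) / (g₀ pq.2 - g₀ pq.1)) with hbad
  obtain ⟨ε₁, hε₁⟩ := ((Set.Ioo_infinite hε₀pos).diff bad.finite_toSet).nonempty
  have hε₁pos : 0 < ε₁ := hε₁.1.1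
  have hε₁lt : ε₁ < ε₀ := hε₁.1.2
  set φ : EuclideanSpace ℝ (Fin d) →L[ℝ] ℝ := lF + ε₁ • g₀ with hφdef
  have hφapp : ∀ x, φ x = lF x + ε₁ * g₀ x := fun x => by
    simp [hφdef, smul_eq_mul]
  have hφinj : ∀ p ∈ s₀, ∀ q ∈ s₀, φ p = φ q → p = q := by
    intro p hp q hq hpq
    by_contra hnepq
    have hg : g₀ q - g₀ p ≠ 0 := by
      intro hc
      exact hnepq (hg₀ (Finset.mem_coe.2 hp) (Finset.mem_coe.2 hq) (sub_eq_zero.1 hc).symm)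
    have hεeq : ε₁ = (lF p - lF q) / (g₀ q - g₀ p) := by
      rw [hφapp, hφapp] at hpq
      field_simp
      linarith
    apply hε₁.2
    rw [hεeq]
    exact Finset.mem_coe.2 (Finset.mem_image.2 ⟨(p, q), Finset.mem_product.2 ⟨hp, hq⟩, rfl⟩)
  set O : Vtx P → Vtx P → Prop :=
    fun a b => (polyGraph P).Adj a b ∧ φ b.1 < φ a.1 with hO
  have hOdir : ∀ a b : Vtx P, O a b → φ b.1 < φ a.1 := fun a b h => h.2
  refine ⟨O, ⟨⟨fun u v h => h.1, ?_⟩, ?_, ?_⟩, ?_⟩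
  · -- orientation
    intro u v hadj
    have hval : u.1 ≠ v.1 := fun hc => hadj.1 (Subtype.ext hc)
    have hφne : φ u.1 ≠ φ v.1 := fun hc => hval (hφinj _ (hvs₀ u) _ (hvs₀ v) hc)
    constructor
    · rintro ⟨-, hlt⟩ ⟨-, hlt'⟩
      exact absurd hlt (not_lt.2 (le_of_lt hlt'))
    · intro hnv
      refine ⟨hadj, ?_⟩
      rcases lt_or_gt_of_ne hφne with h | h
      · exact absurd ⟨hadj.symm, h⟩ hnv
      · exact h
  · -- acyclic
    intro a hcyc
    have ht := Relation.TransGen.mono hOdir _ _ hcyc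
    have htr : Transitive (fun x y : Vtx P => φ y.1 < φ x.1) :=
      fun x y z h1 h2 => lt_trans h2 h1
    rw [@Relation.transGen_eq_self _ _ ⟨htr⟩] at ht
    exact lt_irrefl _ ht
  · -- unique sinks on faces
    intro G hG hGne
    obtain ⟨lG, hlG⟩ := hG hGne
    set A := maxSet s₀ lG with hA
    have hGhull : G = convexHull ℝ (A : Set (EuclideanSpace ℝ (Fin d))) := by
      rw [hlG, hPs, hullMax hs₀]
    have hAne : A.Nonempty := maxSet_nonempty hs₀ lG
    have hAs₀ : ∀ p ∈ A, p ∈ s₀ := fun p hp => maxSet_subset hp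
    have hAG : ∀ p ∈ A, p ∈ G := fun p hp => by
      rw [hGhull]; exact subset_convexHull ℝ _ (Finset.mem_coe.2 hp)
    obtain ⟨mstar, hmA, hmmin⟩ := A.exists_min_image φ hAne
    have hminset : maxSet A (-φ) = {mstar} := by
      apply Finset.eq_singleton_iff_unique_mem.2
      constructor
      · exact mem_maxSet.2 ⟨hmA, fun q hq => by simpa using hmmin q hq⟩
      · intro y hy
        obtain ⟨hyA, hymax⟩ := mem_maxSet.1 hy
        have h1 : φ y ≤ φ mstar := by simpa using hymax mstar hmA
        exact hφinj _ (hAs₀ y hyA) _ (hAs₀ mstar hmA) (le_antisymm h1 (hmmin y hyA))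
    obtain ⟨ε₂, hε₂pos, hper2⟩ := perturb hs₀ lG (-φ)
    have heq2 := (hper2 (ε₂/2) (by linarith) (by linarith)).2
    have hmvtx : IsFace P {mstar} := fun _ => ⟨lG + (ε₂/2) • (-φ), by
      rw [hPs, hullMax hs₀, heq2, hminset]
      simp⟩
    refine ⟨⟨mstar, hmvtx⟩, ⟨hAG mstar hmA, ?_⟩, ?_⟩
    · intro u hu hOu
      have hus₀ := hvs₀ u
      have huA : u.1 ∈ A := hmemA lG G hlG u.1 hu hus₀
      exact absurd hOu.2 (not_lt.2 (hmmin u.1 huA))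
    · intro v hv
      obtain ⟨hvG, hvsink⟩ := hv
      by_contra hne'
      have hvs := hvs₀ v
      have hvA : v.1 ∈ A := hmemA lG G hlG v.1 hvG hvs
      have hvvne : v.1 ≠ mstar := fun hc => hne' (Subtype.ext hc)
      have hφlt : φ mstar < φ v.1 :=
        lt_of_le_of_ne (hmmin v.1 hvA)
          (fun hc => hvvne (hφinj _ (hAs₀ v.1 hvA) _ (hAs₀ mstar hmA) hc.symm))
      obtain ⟨lv, hlv⟩ := hvstrict v
      have hlvA : ∀ p ∈ A, p ≠ v.1 → lv p < lv v.1 := fun p hp => hlv p (hAs₀ p hp)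
      obtain ⟨u, huA, hφu, hune, g, hgsub, hgv, hgu⟩ :=
        improving_edge A v.1 hvA lv φ hlvA mstar hmA hφlt
      have hseg : convexHull ℝ (maxSet A g : Set (EuclideanSpace ℝ (Fin d)))
          = segment ℝ v.1 u := by
        apply Set.Subset.antisymm
        · exact convexHull_min hgsub (convex_segment _ _)
        · rw [← convexHull_pair]
          apply convexHull_mono
          rintro z (rfl | hz)
          · exact Finset.mem_coe.2 hgv
          · rw [Set.mem_singleton_iff] at hz
            subst hz
            exact Finset.mem_coe.2 hgu
      obtain ⟨ε₃, hε₃pos, hper3⟩ := perturb hs₀ lG g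
      have heq3 := (hper3 (ε₃/2) (by linarith) (by linarith)).2
      have hfaceseg : IsFace P (segment ℝ v.1 u) := by
        intro _
        refine ⟨lG + (ε₃/2) • g, ?_⟩
        rw [hseg.symm, hPs, hullMax hs₀, heq3]
      set g₂ : EuclideanSpace ℝ (Fin d) →L[ℝ] ℝ := innerSL ℝ (u - v.1) with hg₂
      have hmax2 : maxSet (maxSet A g) g₂ = {u} := by
        apply Finset.eq_singleton_iff_unique_mem.2
        constructor
        · refine mem_maxSet.2 ⟨hgu, ?_⟩
          intro q hq
          have hqseg : q ∈ segment ℝ v.1 u := hgsub (Finset.mem_coe.2 hq)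
          have := inner_segment_le hqseg
          rw [hg₂]
          exact this
        · intro y hy
          obtain ⟨hyS, hymax⟩ := mem_maxSet.1 hy
          by_contra hyu
          have hyseg : y ∈ segment ℝ v.1 u := hgsub (Finset.mem_coe.2 hyS)
          have hlt := inner_segment_lt hyseg hyu (Ne.symm hune)
          have h2 := hymax u hgu
          rw [hg₂] at h2
          have h2' : (inner (𝕜 := ℝ) (u - v.1) u : ℝ) ≤ inner (𝕜 := ℝ) (u - v.1) y := h2
          linarith
      obtain ⟨ε₄, hε₄pos, hper4⟩ := perturb hAne g g₂
      have heq4 := (hper4 (ε₄/2) (by linarith) (by linarith)).2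
      obtain ⟨ε₅, hε₅pos, hper5⟩ := perturb hs₀ lG (g + (ε₄/2) • g₂)
      have heq5 := (hper5 (ε₅/2) (by linarith) (by linarith)).2
      have huvtx : IsFace P {u} := fun _ => ⟨lG + (ε₅/2) • (g + (ε₄/2) • g₂), by
        rw [hPs, hullMax hs₀, heq5, heq4, hmax2]
        simp⟩
      have hOvu : O v ⟨u, huvtx⟩ := by
        refine ⟨⟨?_, hfaceseg⟩, hφu⟩
        intro hc
        exact hune (congrArg Subtype.val hc).symm
      exact hvsink ⟨u, huvtx⟩ (hAG u huA) hOvu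
  · -- initial
    intro u v hOuv hvF
    by_contra huF
    have hus := hvs₀ u
    have hvs := hvs₀ v
    have hvAF : v.1 ∈ maxSet s₀ lF := hmemA lF F hlF v.1 hvF hvs
    have huAF : u.1 ∉ maxSet s₀ lF := by
      intro hc
      apply huF
      rw [hFhull]
      exact subset_convexHull ℝ _ (Finset.mem_coe.2 hc)
    have hlt := (hper0 ε₁ hε₁pos hε₁lt).1 u.1 hus v.1 hvs huAF hvAF
    rw [← hφdef] at hlt
    exact absurd hOuv.2 (not_lt.2 (le_of_lt hlt))
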